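/- For y > 0, the identity d/dy(u/y) = (2/y²)·((n−2)/u − u''/(1+(u')²)) combined with a uniform bound |u''| ≤ D, u ≥ c > 0 and boundedness of u' yields |d/dy(u/y)| ≤ D'/y² for a constant D'; hence u(y)/y converges as y → ∞ and for every δ > 0 there is y_δ such that |u(y)/y − lim| < δ for all y ≥ y_δ, with y_δ uniform over any family of solutions satisfying these uniform bounds. -/

import Mathlib

open Set Filter Topology

/-- Uniform tail estimate for the ratio `u(y)/y` of solutions of the
self-expander ODE: under uniform bounds `u ≥ c`, `|u'| ≤ D`, `|u''| ≤ D`, the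
identity `d/dy(u/y) = (2/y²)((n-2)/u - u''/(1+(u')²))` gives
`|d/dy(u/y)| ≤ D'/y²` for a constant `D'` depending only on `n, c, D`; hence
`u(y)/y` converges as `y → ∞`, and for every `δ > 0` there is `y_δ` (uniform
over all solutions with these bounds) with `|u(y)/y - lim| < δ` for `y ≥ y_δ`. -/
theorem selfexpander_uniform_tail_estimate
    (n : ℕ) (hn : 3 ≤ n) (c D : ℝ) (hc : 0 < c) (hD : 0 < D) :
    ∃ D' : ℝ, 0 < D' ∧ ∀ δ : ℝ, 0 < δ → ∃ yδ : ℝ, 0 < yδ ∧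
      ∀ u u' u'' : ℝ → ℝ,
        (∀ y : ℝ, 0 < y → HasDerivAt u (u' y) y) →
        (∀ y : ℝ, 0 < y → HasDerivAt u' (u'' y) y) →
        (∀ y : ℝ, 0 < y → c ≤ u y) →
        (∀ y : ℝ, 0 < y → |u' y| ≤ D) →
        (∀ y : ℝ, 0 < y → |u'' y| ≤ D) →
        (∀ y : ℝ, 0 < y →
          u'' y = (1 + (u' y)^2) * ((u y - u' y * y)/2 + ((n : ℝ) - 2) / u y)) →
        (∀ y : ℝ, 0 < y → HasDerivAt (fun z => u z / z)
            ((2 / y^2) * (((n : ℝ) - 2) / u y - u'' y / (1 + (u' y)^2))) y) ∧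
        (∀ y : ℝ, 0 < y →
          |(2 / y^2) * (((n : ℝ) - 2) / u y - u'' y / (1 + (u' y)^2))| ≤ D' / y^2) ∧
        ∃ l : ℝ, Tendsto (fun y => u y / y) atTop (𝓝 l) ∧
          ∀ y : ℝ, yδ ≤ y → |u y / y - l| < δ := by
  have hn2 : (1:ℝ) ≤ (n:ℝ) - 2 := by
    have h3 : (3:ℝ) ≤ (n:ℝ) := by exact_mod_cast hn
    linarith
  set D' : ℝ := 2 * (((n:ℝ) - 2)/c + D) with hD'def
  have hD'pos : 0 < D' := by
    have h1 : 0 < ((n:ℝ)-2)/c := div_pos (by linarith) hc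
    rw [hD'def]; linarith
  refine ⟨D', hD'pos, ?_⟩
  intro δ hδ
  set yδ : ℝ := max 1 (2*D'/δ) with hyδdef
  have hyδ1 : (1:ℝ) ≤ yδ := le_max_left _ _
  have hyδpos : 0 < yδ := lt_of_lt_of_le one_pos hyδ1
  refine ⟨yδ, hyδpos, ?_⟩
  intro u u' u'' hu hu' huc hu'D hu''D hode
  have hA : ∀ y : ℝ, 0 < y → (0:ℝ) < 1 + (u' y)^2 := fun y _ => by positivity
  have hcu : ∀ y : ℝ, 0 < y → 0 < u y := fun y hy => lt_of_lt_of_le hc (huc y hy)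
  -- derivative identity
  have hderiv : ∀ y : ℝ, 0 < y → HasDerivAt (fun z => u z / z)
      ((2 / y^2) * (((n : ℝ) - 2) / u y - u'' y / (1 + (u' y)^2))) y := by
    intro y hy
    have h1 : HasDerivAt (fun z => u z / z) ((u' y * y - u y * 1)/y^2) y :=
      (hu y hy).div (hasDerivAt_id y) hy.ne'
    convert h1 using 1
    have hAne : (1 + (u' y)^2) ≠ 0 := (hA y hy).ne'
    have hune : u y ≠ 0 := (hcu y hy).ne'
    rw [hode y hy]
    field_simp
    ring
  -- pointwise bound
  have hbound : ∀ y : ℝ, 0 < y →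
      |(2 / y^2) * (((n : ℝ) - 2) / u y - u'' y / (1 + (u' y)^2))| ≤ D' / y^2 := by
    intro y hy
    have hX : |((n : ℝ) - 2) / u y - u'' y / (1 + (u' y)^2)| ≤ ((n:ℝ)-2)/c + D := by
      have h1 : |((n : ℝ) - 2) / u y| ≤ ((n:ℝ)-2)/c := by
        rw [abs_of_nonneg (div_nonneg (by linarith) (hcu y hy).le)]
        have h0 : (0:ℝ) ≤ (n:ℝ) - 2 := by linarith
        have h1 : c ≤ u y := huc y hy
        gcongr
      have h2 : |u'' y / (1 + (u' y)^2)| ≤ D := by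
        rw [abs_div, abs_of_pos (hA y hy)]
        calc |u'' y| / (1 + (u' y)^2) ≤ |u'' y| := by
              apply div_le_self (abs_nonneg _)
              nlinarith [sq_nonneg (u' y)]
          _ ≤ D := hu''D y hy
      calc |((n : ℝ) - 2) / u y - u'' y / (1 + (u' y)^2)|
          ≤ |((n : ℝ) - 2) / u y| + |u'' y / (1 + (u' y)^2)| := abs_sub _ _
        _ ≤ ((n:ℝ)-2)/c + D := add_le_add h1 h2
    have h2y : (0:ℝ) < 2 / y^2 := by positivity
    calc |(2 / y^2) * (((n : ℝ) - 2) / u y - u'' y / (1 + (u' y)^2))|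
        = (2 / y^2) * |((n : ℝ) - 2) / u y - u'' y / (1 + (u' y)^2)| := by
          rw [abs_mul, abs_of_pos h2y]
      _ ≤ (2 / y^2) * (((n:ℝ)-2)/c + D) := by gcongr
      _ = D' / y^2 := by rw [hD'def]; ring
  refine ⟨hderiv, hbound, ?_⟩
  -- limit
  set f : ℝ → ℝ := fun y => u y / y with hfdef
  set g : ℝ → ℝ := fun y =>
    (2 / y^2) * (((n : ℝ) - 2) / u y - u'' y / (1 + (u' y)^2)) with hgdef
  have hDy : ∀ y : ℝ, 0 < y → HasDerivAt (fun z : ℝ => D'/z) (-(D'/y^2)) y := by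
    intro y hy
    have := (hasDerivAt_inv hy.ne').const_mul D'
    simpa [div_eq_mul_inv, mul_comm, neg_mul, mul_neg] using this
  have hh : AntitoneOn (fun y => f y + D'/y) (Ici 1) := by
    apply antitoneOn_of_deriv_nonpos (convex_Ici 1)
    · intro y hy
      have hy0 : (0:ℝ) < y := lt_of_lt_of_le one_pos hy
      exact (((hderiv y hy0).add (hDy y hy0)).continuousAt).continuousWithinAt
    · intro y hy
      rw [interior_Ici] at hy
      have hy0 : (0:ℝ) < y := lt_trans one_pos hy
      exact (((hderiv y hy0).add (hDy y hy0)).differentiableAt).differentiableWithinAt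
    · intro y hy
      rw [interior_Ici] at hy
      have hy0 : (0:ℝ) < y := lt_trans one_pos hy
      have hd : HasDerivAt (fun y => f y + D'/y) (g y + -(D'/y^2)) y :=
        (hderiv y hy0).add (hDy y hy0)
      rw [hd.deriv]
      have := (abs_le.1 (hbound y hy0)).2
      have hgy : g y = 2 / y ^ 2 * (((n:ℝ) - 2) / u y - u'' y / (1 + u' y ^ 2)) := rfl
      linarith
  have hk : MonotoneOn (fun y => f y - D'/y) (Ici 1) := by
    apply monotoneOn_of_deriv_nonneg (convex_Ici 1)
    · intro y hy
      have hy0 : (0:ℝ) < y := lt_of_lt_of_le one_pos hy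
      exact (((hderiv y hy0).sub (hDy y hy0)).continuousAt).continuousWithinAt
    · intro y hy
      rw [interior_Ici] at hy
      have hy0 : (0:ℝ) < y := lt_trans one_pos hy
      exact (((hderiv y hy0).sub (hDy y hy0)).differentiableAt).differentiableWithinAt
    · intro y hy
      rw [interior_Ici] at hy
      have hy0 : (0:ℝ) < y := lt_trans one_pos hy
      have hd : HasDerivAt (fun y => f y - D'/y) (g y - -(D'/y^2)) y :=
        (hderiv y hy0).sub (hDy y hy0)
      rw [hd.deriv]
      have := (abs_le.1 (hbound y hy0)).1
      have hgy : g y = 2 / y ^ 2 * (((n:ℝ) - 2) / u y - u'' y / (1 + u' y ^ 2)) := rfl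
      linarith
  -- key increment estimate
  have key : ∀ a b : ℝ, 1 ≤ a → a ≤ b → |f b - f a| ≤ D'/a := by
    intro a b ha hab
    have ha0 : (0:ℝ) < a := lt_of_lt_of_le one_pos ha
    have hb0 : (0:ℝ) < b := lt_of_lt_of_le ha0 hab
    have hhab : f b + D'/b ≤ f a + D'/a := hh (mem_Ici.2 ha) (mem_Ici.2 (ha.trans hab)) hab
    have hkab : f a - D'/a ≤ f b - D'/b := hk (mem_Ici.2 ha) (mem_Ici.2 (ha.trans hab)) hab
    have hDb : 0 ≤ D'/b := by positivity
    rw [abs_sub_le_iff]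
    constructor <;> linarith
  have hcauchy : CauchySeq f := by
    rw [Metric.cauchySeq_iff']
    intro ε hε
    refine ⟨max 1 (2*D'/ε), ?_⟩
    intro y hy
    have h1 : (1:ℝ) ≤ max 1 (2*D'/ε) := le_max_left _ _
    have h2 : 2*D'/ε ≤ max 1 (2*D'/ε) := le_max_right _ _
    have h3 : (0:ℝ) < 2*D'/ε := by positivity
    rw [Real.dist_eq]
    calc |f y - f (max 1 (2*D'/ε))| ≤ D' / (max 1 (2*D'/ε)) := key _ _ h1 hy
      _ ≤ D' / (2*D'/ε) := by gcongr
      _ = ε/2 := by field_simp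
      _ < ε := by linarith
  obtain ⟨l, hl⟩ := cauchySeq_tendsto_of_complete hcauchy
  refine ⟨l, hl, ?_⟩
  have tail : ∀ y : ℝ, 1 ≤ y → |f y - l| ≤ D'/y := by
    intro y hy
    have h1 : Tendsto (fun b => |f b - f y|) atTop (𝓝 |l - f y|) :=
      ((hl.sub_const (f y)).abs)
    have h2 : ∀ᶠ b in atTop, |f b - f y| ≤ D'/y := by
      filter_upwards [eventually_ge_atTop y] with b hb
      exact key y b hy hb
    have := le_of_tendsto h1 h2
    rwa [abs_sub_comm] at this
  intro y hy
  have hy1 : (1:ℝ) ≤ y := hyδ1.trans hy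
  have hy0 : (0:ℝ) < y := lt_of_lt_of_le one_pos hy1
  have h2 : 2*D'/δ ≤ y := (le_max_right _ _).trans hy
  have h3 : (0:ℝ) < 2*D'/δ := by positivity
  calc |u y / y - l| = |f y - l| := rfl
    _ ≤ D'/y := tail y hy1
    _ ≤ D'/(2*D'/δ) := by gcongr
    _ = δ/2 := by field_simp
    _ < δ := by linarith
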